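/- Let g = g₁ + g₂ with g₁, g₂ ≥ 1, let τ₁ ∈ H_{g₁}, τ₂ ∈ H_{g₂}, and let τ = diag(τ₁, τ₂) ∈ H_g. Then for every odd characteristic m ∈ F_2^g × F_2^g and all indices 1 ≤ i ≤ g₁ < j ≤ g, the gradient satisfies (v_m(τ))_i · (v_m(τ))_j = 0. Hence the Gauss images of all smooth two-torsion points on the theta divisor of the decomposable abelian variety X_τ lie on each of the g₁·g₂ reducible quadrics X_i X_j = 0 in P^{g−1}; in particular they lie on the union of the two coordinate linear subspaces ℂ^{g₁} ∪ ℂ^{g₂} ⊂ ℂ^g. -/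

import Mathlib

open scoped BigOperators
open Matrix

noncomputable section

/-- The theta function with characteristic `[ε, δ]`. -/
def theta {ι : Type} [Fintype ι] (ε δ : ι → ZMod 2) (τ : ι → ι → ℂ) (z : ι → ℂ) : ℂ :=
  ∑' p : ι → ℤ,
    Complex.exp ((Real.pi : ℂ) * Complex.I *
      ((∑ i, ∑ j, ((p i : ℂ) + ((ε i).val : ℂ) / 2) * τ i j * ((p j : ℂ) + ((ε j).val : ℂ) / 2)) +
        2 * ∑ i, ((p i : ℂ) + ((ε i).val : ℂ) / 2) * (z i + ((δ i).val : ℂ) / 2)))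

/-- The Siegel upper half-space: symmetric complex matrices with positive definite
imaginary part. -/
def SiegelUpper (ι : Type) [Fintype ι] : Set (ι → ι → ℂ) :=
  {τ | (∀ i j, τ i j = τ j i) ∧ (Matrix.of fun i j => (τ i j).im).PosDef}

/-- The gradient `v_m(τ) = grad_z θ_m(τ,z)|_{z=0}`. -/
def vGrad {ι : Type} [Fintype ι] [DecidableEq ι] (ε δ : ι → ZMod 2) (τ : ι → ι → ℂ) :
    ι → ℂ :=
  fun i => fderiv ℂ (theta ε δ τ) 0 (Pi.single i 1)

/-- The second order theta function `Θ[σ](τ,z) = θ_{[σ,0]}(2τ,2z)`. -/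
def theta2 {ι : Type} [Fintype ι] (σ : ι → ZMod 2) (τ : ι → ι → ℂ) (z : ι → ℂ) : ℂ :=
  theta σ 0 (fun i j => 2 * τ i j) (fun i => 2 * z i)

/-- The second order theta constant `Θ[σ](τ)`. -/
def Theta2c {ι : Type} [Fintype ι] (σ : ι → ZMod 2) (τ : ι → ι → ℂ) : ℂ := theta2 σ τ 0

/-- `∂_{z_i}∂_{z_j} Θ[σ](τ, z)|_{z = 0}`. -/
def dz2Theta2 {ι : Type} [Fintype ι] [DecidableEq ι] (σ : ι → ZMod 2) (τ : ι → ι → ℂ)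
    (i j : ι) : ℂ :=
  fderiv ℂ (fun z => fderiv ℂ (theta2 σ τ) z (Pi.single i 1)) 0 (Pi.single j 1)

/-- The matrix `A_{εδ}(τ)`. -/
def Amat {ι : Type} [Fintype ι] [DecidableEq ι] (ε δ : ι → ZMod 2) (τ : ι → ι → ℂ) :
    Matrix ι ι ℂ :=
  Matrix.of fun i j => dz2Theta2 δ τ i j * Theta2c ε τ - dz2Theta2 ε τ i j * Theta2c δ τ

/-- The matrix `C_{εδ}(τ)`. -/
def Cmat {ι : Type} [Fintype ι] [DecidableEq ι] (ε δ : ι → ZMod 2) (τ : ι → ι → ℂ) :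
    Matrix ι ι ℂ :=
  Matrix.of fun i j => 2 * vGrad ε δ τ i * vGrad ε δ τ j

/-- An integer matrix viewed as a complex matrix. -/
def intMatC {g : ℕ} (M : Matrix (Fin g) (Fin g) ℤ) : Matrix (Fin g) (Fin g) ℂ :=
  M.map fun n => (n : ℂ)

/-- The automorphy factor `Cτ + D`. -/
def cocycle {g : ℕ} (C D : Matrix (Fin g) (Fin g) ℤ) (τ : Fin g → Fin g → ℂ) :
    Matrix (Fin g) (Fin g) ℂ :=
  intMatC C * Matrix.of τ + intMatC D

/-- The action `γ·τ = (Aτ+B)(Cτ+D)⁻¹` of a symplectic matrix with blocks `A B C D`. -/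
def modAction {g : ℕ} (A B C D : Matrix (Fin g) (Fin g) ℤ) (τ : Fin g → Fin g → ℂ) :
    Fin g → Fin g → ℂ :=
  fun i j => ((intMatC A * Matrix.of τ + intMatC B) * (cocycle C D τ)⁻¹) i j

/-- `[[A,B],[C,D]] ∈ Sp(2g,ℤ)`. -/
def IsSymplectic {g : ℕ} (A B C D : Matrix (Fin g) (Fin g) ℤ) : Prop :=
  Aᵀ * C = Cᵀ * A ∧ Bᵀ * D = Dᵀ * B ∧ Aᵀ * D - Cᵀ * B = 1

/-- `[[A,B],[C,D]] ∈ Γ_g(2,4)`. -/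
def InGamma24 {g : ℕ} (A B C D : Matrix (Fin g) (Fin g) ℤ) : Prop :=
  IsSymplectic A B C D ∧
    A.map (fun n : ℤ => (n : ZMod 2)) = 1 ∧ B.map (fun n : ℤ => (n : ZMod 2)) = 0 ∧
    C.map (fun n : ℤ => (n : ZMod 2)) = 0 ∧ D.map (fun n : ℤ => (n : ZMod 2)) = 1 ∧
    (∀ i, (4 : ℤ) ∣ (Aᵀ * B) i i) ∧ (∀ i, (4 : ℤ) ∣ (Cᵀ * D) i i)

/-- `[[A,B],[C,D]] ∈ Γ*_g(2,4)`. -/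
def InGamma24Star {g : ℕ} (A B C D : Matrix (Fin g) (Fin g) ℤ) : Prop :=
  InGamma24 A B C D ∧ (4 : ℤ) ∣ (A - 1).trace

/-- The coordinate derivative `∂/∂τ_{ij}` (with `τ_{ij} = τ_{ji}`, `i ≤ j`, as independent
coordinates) of a function of `τ`. -/
def dTauRaw {g : ℕ} (i j : Fin g) (F : (Fin g → Fin g → ℂ) → ℂ) (τ : Fin g → Fin g → ℂ) : ℂ :=
  fderiv ℂ F τ (fun a b => if (a = i ∧ b = j) ∨ (a = j ∧ b = i) then 1 else 0)

/-- The operator `∂_{ij} = ((1+δ_{ij})/2) ∂/∂τ_{ij}`. -/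
def dTau {g : ℕ} (i j : Fin g) (F : (Fin g → Fin g → ℂ) → ℂ) : (Fin g → Fin g → ℂ) → ℂ :=
  fun τ => ((1 + if i = j then 1 else 0) / 2 : ℂ) * dTauRaw i j F τ

/-- The operator minor `|∂^I_J|`: the determinant of the submatrix of `∂ = (∂_{ij})` with rows
`I` and columns `J`, expanded as a signed sum of compositions of the operators `∂_{ij}`. -/
def opMinor {g : ℕ} (I J : Finset (Fin g)) (F : (Fin g → Fin g → ℂ) → ℂ) :
    (Fin g → Fin g → ℂ) → ℂ :=
  if h : J.card = I.card then
    ∑ σ : Equiv.Perm (Fin I.card),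
      ((Equiv.Perm.sign σ : ℤ) : ℂ) •
        (List.finRange I.card).foldr
          (fun t G => dTau (I.orderIsoOfFin rfl t).1 (J.orderIsoOfFin h (σ t)).1 G) F
  else 0

/-- The enumeration of `α` listing first the elements of `I` in increasing order, then the
elements of the complement of `I` in increasing order. -/
def concatEnum {α : Type} [Fintype α] [LinearOrder α] (I : Finset α) :
    Fin (Fintype.card α) ≃ α :=
  ((finCongr (Nat.add_sub_cancel' I.card_le_univ)).symm).trans <|
    finSumFinEquiv.symm.trans <|
      (Equiv.sumCongr (I.orderIsoOfFin rfl).toEquiv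
        ((Iᶜ.orderIsoOfFin (Finset.card_compl I)).toEquiv.trans
          (Equiv.subtypeEquivRight (q := fun x => x ∈ (I : Set α)ᶜ) (fun x => by simp)))).trans <|
        Equiv.Set.sumCompl (I : Set α)

/-- The permutation of `α` turning the concatenation of `I` and `Iᶜ` (each increasingly
ordered) into increasing order. -/
def concatPerm {α : Type} [Fintype α] [LinearOrder α] (I : Finset α) : Equiv.Perm α :=
  (concatEnum I).symm.trans (monoEquivOfFin α rfl).toEquiv

/-- The sign `s(I)` of the permutation `concatPerm I`. -/
def sSign {α : Type} [Fintype α] [LinearOrder α] (I : Finset α) : ℤˣ :=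
  Equiv.Perm.sign (concatPerm I)

/-- The sign `s(I)` of a subset `I` of an ambient finite set `S`. -/
def sSignIn {α : Type} [Fintype α] [LinearOrder α] [DecidableEq α] (S I : Finset α) : ℤˣ :=
  sSign (α := {x // x ∈ S}) (I.subtype (· ∈ S))

/-- Freitag's pairing matrix `B(τ)` associated to two scalar functions `f, h` of `τ`. -/
def freitagB {g : ℕ} (f h : (Fin g → Fin g → ℂ) → ℂ) (τ : Fin g → Fin g → ℂ) :
    Matrix (Fin g) (Fin g) ℂ :=
  Matrix.of fun i j => (-1 : ℂ) ^ ((i : ℕ) + (j : ℕ)) *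
    ∑ k ∈ Finset.range g, ((-1 : ℂ) ^ k / ((g - 1).choose k : ℂ)) *
      ∑ I ∈ (Finset.univ.erase i).powersetCard k,
        ∑ J ∈ (Finset.univ.erase j).powersetCard k,
          ((sSignIn (Finset.univ.erase i) I : ℤ) : ℂ) *
            ((sSignIn (Finset.univ.erase j) J : ℤ) : ℂ) *
            opMinor I J f τ *
            opMinor ((Finset.univ.erase i) \ I) ((Finset.univ.erase j) \ J) h τ

/-- The generalized cross product of `g-1` vectors in `ℂ^g`. -/
def crossVec {m g : ℕ} (v : Fin m → Fin g → ℂ) : Fin g → ℂ :=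
  if h : g = m + 1 then
    fun k => (-1 : ℂ) ^ (k : ℕ) *
      Matrix.det (Matrix.of fun a b : Fin m => v b (Fin.cast h.symm ((Fin.cast h k).succAbove a)))
  else 0

/-- The matrix `W(m₁, …, m_{g-1})(τ) = π^{-2g+2} Fᵗ F` built from the cross product `F` of a
family of vectors. -/
def Wmat {m g : ℕ} (v : Fin m → Fin g → ℂ) : Matrix (Fin g) (Fin g) ℂ :=
  Matrix.of fun i j => (Real.pi : ℂ) ^ (2 - 2 * (g : ℤ)) * crossVec v i * crossVec v j

/-- The block diagonal matrix `diag(τ₁, τ₂)`. -/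
def blockDiag {ι κ : Type} (τ₁ : ι → ι → ℂ) (τ₂ : κ → κ → ℂ) : ι ⊕ κ → ι ⊕ κ → ℂ :=
  fun a b =>
    match a, b with
    | .inl i, .inl j => τ₁ i j
    | .inr i, .inr j => τ₂ i j
    | _, _ => 0



namespace Stmt19Aux

lemma blockDiag_offdiag₁ {ι κ : Type} (τ₁ : ι → ι → ℂ) (τ₂ : κ → κ → ℂ) (i : ι) (j : κ) :
    blockDiag τ₁ τ₂ (.inl i) (.inr j) = 0 := rfl

lemma blockDiag_offdiag₂ {ι κ : Type} (τ₁ : ι → ι → ℂ) (τ₂ : κ → κ → ℂ) (i : ι) (j : κ) :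
    blockDiag τ₁ τ₂ (.inr j) (.inl i) = 0 := rfl

def nsgn (g₁ g₂ : ℕ) : Fin g₁ ⊕ Fin g₂ → ℂ := Sum.elim (fun _ => -1) (fun _ => 1)

def flipE {g₁ g₂ : ℕ} (ε : Fin g₁ ⊕ Fin g₂ → ZMod 2) :
    (Fin g₁ ⊕ Fin g₂ → ℤ) ≃ (Fin g₁ ⊕ Fin g₂ → ℤ) where
  toFun p a := Sum.elim (fun i => -p (.inl i) - ((ε (.inl i)).val : ℤ)) (fun j => p (.inr j)) a
  invFun p a := Sum.elim (fun i => -p (.inl i) - ((ε (.inl i)).val : ℤ)) (fun j => p (.inr j)) a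
  left_inv p := by funext a; cases a <;> simp
  right_inv p := by funext a; cases a <;> simp

lemma exp_neg_pi_mul_nat (n : ℕ) : Complex.exp (-((Real.pi : ℂ) * Complex.I) * n) = (-1) ^ n := by
  rw [mul_comm, Complex.exp_nat_mul, Complex.exp_neg, Complex.exp_pi_mul_I]
  norm_num

lemma theta_flip {g₁ g₂ : ℕ} (τ₁ : Fin g₁ → Fin g₁ → ℂ) (τ₂ : Fin g₂ → Fin g₂ → ℂ)
    (ε δ : Fin g₁ ⊕ Fin g₂ → ZMod 2) (z : Fin g₁ ⊕ Fin g₂ → ℂ) :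
    theta ε δ (blockDiag τ₁ τ₂) (fun a => nsgn g₁ g₂ a * z a)
      = (-1 : ℂ) ^ (∑ i : Fin g₁, (ε (.inl i)).val * (δ (.inl i)).val)
        * theta ε δ (blockDiag τ₁ τ₂) z := by
  set s₁ : ℕ := ∑ i : Fin g₁, (ε (.inl i)).val * (δ (.inl i)).val with hs₁
  unfold theta
  rw [← tsum_mul_left]
  refine ((Equiv.tsum_eq (flipE ε) _).symm.trans (tsum_congr fun p => ?_))
  set T := blockDiag τ₁ τ₂ with hT
  have hq : ∀ a, ((flipE ε p a : ℂ) + ((ε a).val : ℂ) / 2)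
      = nsgn g₁ g₂ a * ((p a : ℂ) + ((ε a).val : ℂ) / 2) := by
    intro a
    cases a <;> simp [flipE, nsgn] <;> push_cast <;> ring
  have hQ : (∑ a, ∑ b, ((flipE ε p a : ℂ) + ((ε a).val : ℂ)/2) * T a b *
        ((flipE ε p b : ℂ) + ((ε b).val : ℂ)/2))
      = ∑ a, ∑ b, ((p a : ℂ) + ((ε a).val : ℂ)/2) * T a b * ((p b : ℂ) + ((ε b).val : ℂ)/2) := by
    refine Finset.sum_congr rfl fun a _ => Finset.sum_congr rfl fun b _ => ?_
    rw [hq a, hq b]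
    cases a <;> cases b <;> simp [nsgn, hT, blockDiag_offdiag₁, blockDiag_offdiag₂] <;> ring
  set K : ℂ := ∑ i : Fin g₁, ((p (.inl i) : ℂ) + ((ε (.inl i)).val : ℂ)/2) * ((δ (.inl i)).val : ℂ)
    with hK
  have hL : (∑ a, ((flipE ε p a : ℂ) + ((ε a).val : ℂ)/2) * (nsgn g₁ g₂ a * z a + ((δ a).val : ℂ)/2))
      = (∑ a, ((p a : ℂ) + ((ε a).val : ℂ)/2) * (z a + ((δ a).val : ℂ)/2)) - K := by
    rw [Fintype.sum_sum_type, Fintype.sum_sum_type (fun a => ((p a : ℂ) + ((ε a).val : ℂ)/2) * (z a + ((δ a).val : ℂ)/2)), hK]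
    have h1 : ∀ i : Fin g₁,
        ((flipE ε p (.inl i) : ℂ) + ((ε (.inl i)).val : ℂ)/2) *
          (nsgn g₁ g₂ (.inl i) * z (.inl i) + ((δ (.inl i)).val : ℂ)/2)
        = ((p (.inl i) : ℂ) + ((ε (.inl i)).val : ℂ)/2) * (z (.inl i) + ((δ (.inl i)).val : ℂ)/2)
          - ((p (.inl i) : ℂ) + ((ε (.inl i)).val : ℂ)/2) * ((δ (.inl i)).val : ℂ) := by
      intro i'
      rw [hq (.inl i')]
      simp only [nsgn, Sum.elim_inl]
      ring
    have h2 : ∀ j : Fin g₂,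
        ((flipE ε p (.inr j) : ℂ) + ((ε (.inr j)).val : ℂ)/2) *
          (nsgn g₁ g₂ (.inr j) * z (.inr j) + ((δ (.inr j)).val : ℂ)/2)
        = ((p (.inr j) : ℂ) + ((ε (.inr j)).val : ℂ)/2) * (z (.inr j) + ((δ (.inr j)).val : ℂ)/2) := by
      intro j'
      rw [hq (.inr j')]
      simp only [nsgn, Sum.elim_inr]
      ring
    rw [Finset.sum_congr rfl fun i' _ => h1 i', Finset.sum_congr rfl fun j' _ => h2 j',
      Finset.sum_sub_distrib]
    ring
  rw [hQ, hL]
  set Q : ℂ := ∑ a, ∑ b, ((p a : ℂ) + ((ε a).val : ℂ)/2) * T a b * ((p b : ℂ) + ((ε b).val : ℂ)/2)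
  set L : ℂ := ∑ a, ((p a : ℂ) + ((ε a).val : ℂ)/2) * (z a + ((δ a).val : ℂ)/2)
  have hsplit : (Real.pi : ℂ) * Complex.I * (Q + 2 * (L - K))
      = (Real.pi : ℂ) * Complex.I * (Q + 2 * L) + (-(2 * (Real.pi : ℂ) * Complex.I) * K) := by
    ring
  rw [hsplit, Complex.exp_add]
  -- now compute exp(-(2πi) K) = (-1)^s₁
  set k₁ : ℤ := ∑ i : Fin g₁, p (.inl i) * ((δ (.inl i)).val : ℤ) with hk₁
  have hKval : K = (k₁ : ℂ) + (s₁ : ℂ) / 2 := by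
    rw [hK, hk₁, hs₁]
    push_cast
    rw [Finset.sum_div, ← Finset.sum_add_distrib]
    refine Finset.sum_congr rfl fun i' _ => ?_
    ring
  have hexp : Complex.exp (-(2 * (Real.pi : ℂ) * Complex.I) * K) = (-1) ^ s₁ := by
    rw [hKval, show -(2 * (Real.pi : ℂ) * Complex.I) * ((k₁ : ℂ) + (s₁ : ℂ) / 2)
        = ((-k₁ : ℤ) : ℂ) * (2 * (Real.pi : ℂ) * Complex.I)
          + -((Real.pi : ℂ) * Complex.I) * (s₁ : ℕ) from by push_cast; ring,
      Complex.exp_add, Complex.exp_int_mul_two_pi_mul_I, exp_neg_pi_mul_nat, one_mul]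
  rw [hexp]
  ring

def negCLM (g₁ g₂ : ℕ) : ((Fin g₁ ⊕ Fin g₂) → ℂ) →L[ℂ] ((Fin g₁ ⊕ Fin g₂) → ℂ) :=
  ContinuousLinearMap.pi fun a => nsgn g₁ g₂ a • ContinuousLinearMap.proj a

lemma negCLM_apply {g₁ g₂ : ℕ} (z : (Fin g₁ ⊕ Fin g₂) → ℂ) (a : Fin g₁ ⊕ Fin g₂) :
    negCLM g₁ g₂ z a = nsgn g₁ g₂ a * z a := rfl

end Stmt19Aux

open Stmt19Aux

/-- on a block diagonal period matrix, the gradient of any odd theta function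
has vanishing products between the two blocks of coordinates; hence the Gauss images of all
smooth two-torsion points of the theta divisor lie on the quadrics `X_i X_j = 0`. -/
theorem statement19 {g₁ g₂ : ℕ} (h₁ : 1 ≤ g₁) (h₂ : 1 ≤ g₂)
    (τ₁ : Fin g₁ → Fin g₁ → ℂ) (hτ₁ : τ₁ ∈ SiegelUpper (Fin g₁))
    (τ₂ : Fin g₂ → Fin g₂ → ℂ) (hτ₂ : τ₂ ∈ SiegelUpper (Fin g₂))
    (ε δ : Fin g₁ ⊕ Fin g₂ → ZMod 2) (hodd : (∑ a, ε a * δ a) = 1)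
    (i : Fin g₁) (j : Fin g₂) :
    vGrad ε δ (blockDiag τ₁ τ₂) (Sum.inl i) * vGrad ε δ (blockDiag τ₁ τ₂) (Sum.inr j) = 0 := by
  set s₁ : ℕ := ∑ i : Fin g₁, (ε (.inl i)).val * (δ (.inl i)).val with hs₁
  set f : ((Fin g₁ ⊕ Fin g₂) → ℂ) → ℂ := theta ε δ (blockDiag τ₁ τ₂) with hf
  have hv : ∀ a, vGrad ε δ (blockDiag τ₁ τ₂) a = fderiv ℂ f 0 (Pi.single a 1) := fun a => rfl
  by_cases hd : DifferentiableAt ℂ f 0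
  · have hfe : (fun z => f (negCLM g₁ g₂ z)) = fun z => (-1 : ℂ) ^ s₁ * f z := by
      funext z
      have h := theta_flip τ₁ τ₂ ε δ z
      have hz : (negCLM g₁ g₂ z) = fun a => nsgn g₁ g₂ a * z a := by
        funext a; exact negCLM_apply z a
      rw [hf, hz]
      exact h
    have h0 : negCLM g₁ g₂ 0 = 0 := map_zero _
    have h1 : fderiv ℂ (fun z => f (negCLM g₁ g₂ z)) 0
        = (fderiv ℂ f 0).comp (negCLM g₁ g₂ : ((Fin g₁ ⊕ Fin g₂) → ℂ) →L[ℂ] _) := by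
      have hdc : DifferentiableAt ℂ f (negCLM g₁ g₂ 0) := by rw [h0]; exact hd
      have := fderiv_comp (𝕜 := ℂ) 0 hdc ((negCLM g₁ g₂).differentiableAt)
      rw [h0, (negCLM g₁ g₂).fderiv] at this
      exact this
    have h2 : fderiv ℂ (fun z => (-1 : ℂ) ^ s₁ * f z) 0 = ((-1 : ℂ) ^ s₁) • fderiv ℂ f 0 :=
      fderiv_const_mul hd _
    have key : ∀ w, fderiv ℂ f 0 (negCLM g₁ g₂ w) = (-1 : ℂ) ^ s₁ * fderiv ℂ f 0 w := by
      intro w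
      have heq : (fderiv ℂ f 0).comp (negCLM g₁ g₂) = ((-1 : ℂ) ^ s₁) • fderiv ℂ f 0 := by
        rw [← h1, ← h2, hfe]
      have := congrFun (congrArg DFunLike.coe heq) w
      simpa using this
    have hwi : negCLM g₁ g₂ (Pi.single (Sum.inl i) 1) = -Pi.single (Sum.inl i) 1 := by
      funext a
      rw [negCLM_apply]
      rcases a with a | a <;>
        · simp only [nsgn, Sum.elim_inl, Sum.elim_inr, Pi.neg_apply, Pi.single_apply]
          split <;> simp_all
    have hwj : negCLM g₁ g₂ (Pi.single (Sum.inr j) 1) = Pi.single (Sum.inr j) 1 := by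
      funext a
      rw [negCLM_apply]
      rcases a with a | a <;>
        simp [nsgn, Pi.single_apply]
    have e1 := key (Pi.single (Sum.inl i) 1)
    rw [hwi, map_neg] at e1
    have e2 := key (Pi.single (Sum.inr j) 1)
    rw [hwj] at e2
    rcases Nat.even_or_odd s₁ with he | ho
    · rw [he.neg_one_pow] at e1
      have hvi : fderiv ℂ f 0 (Pi.single (Sum.inl i) 1) = 0 := by linear_combination (-1/2 : ℂ) * e1
      rw [hv, hvi, zero_mul]
    · rw [ho.neg_one_pow] at e2
      have hvj : fderiv ℂ f 0 (Pi.single (Sum.inr j) 1) = 0 := by linear_combination (1/2 : ℂ) * e2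
      rw [hv (Sum.inr j), hvj, mul_zero]
  · rw [hv, hv, fderiv_zero_of_not_differentiableAt hd]
    simp
end
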